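/- Let t > 0 and let a ≥ 1 be a real number. The average service latency of Case 2, D̄(θ) = (θ − at)³/(2tθ) + 3(θ − at)²/(2θ) + at²/θ, is strictly convex on the interval (at, ∞). -/

import Mathlib

/-- In Case 2, for t > 0 and a ≥ 1, the average service latency
D̄(θ) = (θ − at)³/(2tθ) + 3(θ − at)²/(2θ) + at²/θ is strictly convex on
(at, ∞). -/
theorem case2_latency_strictly_convex
    (t a : ℝ) (ht : 0 < t) (ha : 1 ≤ a) :
    StrictConvexOn ℝ (Set.Ioi (a * t))
      (fun θ : ℝ =>
        (θ - a * t) ^ 3 / (2 * t * θ) + 3 * (θ - a * t) ^ 2 / (2 * θ) +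
          a * t ^ 2 / θ) := by
  have ha0 : 0 < a := lt_of_lt_of_le one_pos ha
  set b : ℝ := a * t with hb
  have hb0 : 0 < b := mul_pos ha0 ht
  set k : ℝ := 3/2 - 3*a/2 with hk
  set m : ℝ := 3*b^2/(2*t) - 3*b with hm
  set c : ℝ := -(b^3)/(2*t) + 3*b^2/2 + a*t^2 with hc
  set g : ℝ → ℝ := fun x => x^2/(2*t) + k*x + m + c/x with hg
  -- derivative of g at any nonzero point
  have hder : ∀ y : ℝ, y ≠ 0 → HasDerivAt g (y/t + k - c/y^2) y := by
    intro y hy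
    have h1 : HasDerivAt (fun x : ℝ => x^2/(2*t)) (y/t) y := by
      have := (hasDerivAt_pow 2 y).div_const (2*t)
      refine this.congr_deriv ?_
      field_simp
      ring
    have h2 : HasDerivAt (fun x : ℝ => k*x) k y := by
      simpa using (hasDerivAt_id y).const_mul k
    have h3 : HasDerivAt (fun _ : ℝ => m) 0 y := hasDerivAt_const y m
    have h4 : HasDerivAt (fun x : ℝ => c/x) (-(c/y^2)) y := by
      simp only [div_eq_mul_inv]
      refine ((hasDerivAt_inv hy).const_mul c).congr_deriv ?_
      ring
    have := ((h1.add h2).add h3).add h4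
    refine this.congr_deriv ?_
    ring
  have key : StrictConvexOn ℝ (Set.Ioi b) g := by
    apply strictConvexOn_of_deriv2_pos (convex_Ioi b)
    · apply ContinuousOn.add
      apply ContinuousOn.add
      apply ContinuousOn.add
      · exact (continuousOn_pow 2).div_const _
      · exact (continuousOn_id.const_smul k)
      · exact continuousOn_const
      · exact continuousOn_const.div continuousOn_id
          (fun x hx => ne_of_gt (lt_trans hb0 hx))
    · intro x hx
      rw [interior_Ioi] at hx
      have hxb : b < x := hx
      have hx0 : 0 < x := lt_trans hb0 hxb
      have hx0' : x ≠ 0 := ne_of_gt hx0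
      -- deriv g agrees with explicit formula near x
      have hev : deriv g =ᶠ[nhds x] (fun y => y/t + k - c/y^2) := by
        filter_upwards [eventually_ne_nhds hx0'] with y hy
        exact (hder y hy).deriv
      have hd2 : deriv (deriv g) x = 1/t + 2*c/x^3 := by
        rw [Filter.EventuallyEq.deriv_eq hev]
        have h1 : HasDerivAt (fun y : ℝ => y/t) (1/t) x := by
          simpa using (hasDerivAt_id x).div_const t
        have h2 : HasDerivAt (fun _ : ℝ => k) 0 x := hasDerivAt_const x k
        have hx2 : (x:ℝ)^2 ≠ 0 := pow_ne_zero 2 hx0'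
        have h3 : HasDerivAt (fun y : ℝ => c/y^2) (-(2*c/x^3)) x := by
          have hp : HasDerivAt (fun y : ℝ => y^2) (2*x) x := by
            simpa using hasDerivAt_pow 2 x
          simp only [div_eq_mul_inv]
          refine ((hp.inv hx2).const_mul c).congr_deriv ?_
          field_simp
        have := (h1.add h2).sub h3
        have hfinal : HasDerivAt (fun y : ℝ => y/t + k - c/y^2) (1/t + 2*c/x^3) x := by
          refine this.congr_deriv ?_; ring
        exact hfinal.deriv
      simp only [Function.iterate_succ, Function.iterate_zero, Function.comp_apply, id]
      rw [hd2]
      have hx3 : (0:ℝ) < x^3 := pow_pos hx0 3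
      have hcube : b^3 < x^3 := pow_lt_pow_left₀ hxb hb0.le three_ne_zero
      have hnum : 0 < x^3 + 2*c*t := by
        have h2ct : 2*c*t = -(a*t)^3 + 3*(a*t)^2*t + 2*a*t^3 := by
          rw [hc, hb]
          field_simp
        rw [hb] at hcube
        rw [h2ct]
        nlinarith [mul_pos (mul_pos ha0 ha0) (mul_pos ht (mul_pos ht ht)), mul_pos ha0 (mul_pos ht (mul_pos ht ht))]
      have : 1/t + 2*c/x^3 = (x^3 + 2*c*t)/(t*x^3) := by
        field_simp
      rw [this]
      positivity
  -- transfer from g to the original function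
  have heq : ∀ x ∈ Set.Ioi b, (x - b) ^ 3 / (2 * t * x) + 3 * (x - b) ^ 2 / (2 * x) +
      a * t ^ 2 / x = g x := by
    intro x hx
    have hx0 : x ≠ 0 := ne_of_gt (lt_trans hb0 hx)
    rw [hg, hk, hm, hc, hb]
    field_simp
    ring
  refine ⟨key.1, fun x hx y hy hxy p q hp hq hpq => ?_⟩
  have hmem : p • x + q • y ∈ Set.Ioi b := key.1 hx hy hp.le hq.le hpq
  simp only []
  rw [heq x hx, heq y hy, heq _ hmem]
  exact key.2 hx hy hxy hp hq hpq
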